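/- Let q₀ > 0, α ∈ ℝ, and θ₊ ∈ (0, π) with θ₊ ≠ π/2. Define ξ(x,t) := q₀ x sin θ₊ + (α t / 2) tan θ₊, and define q, s : ℝ × ℝ → ℂ by q(x,t) := q₀ e^{i α t} cos(θ₊ - i ξ(x,t)) sech(ξ(x,t)) and s(x,t) := (1/2) q₀ α sin θ₊ tan θ₊ · sech²(ξ(x,t)). Then for all (x,t) ∈ ℝ²: (i) ∂_x ∂_t q(x,t) + 2 s(x,t) q(x,t) = 0; (ii) ∂_x s(x,t) = -∂_t ( q(x,t) q(-x,-t) ); and (iii) s(-x,-t) = s(x,t). That is, q is an exact (dark) one-soliton solution of the nonlocal reverse space-time Sinh-Gordon equation. -/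

import Mathlib

open Complex

noncomputable def solF (Q A Θ d b : ℂ) : ℂ → ℂ := fun w =>
  Q * Complex.exp (I * A * w) * Complex.cos (Θ - I * (d + b * w)) *
    (Complex.cosh (d + b * w))⁻¹

noncomputable def solFr (Q A Θ d b : ℂ) : ℂ → ℂ := fun w =>
  Q * Complex.exp (-(I * A * w)) * Complex.cos (Θ + I * (d + b * w)) *
    (Complex.cosh (d + b * w))⁻¹

noncomputable def solG (Q A E Θ b d s : ℂ) : ℂ → ℂ := fun w =>
  Q * E * (I * A * Complex.cos (Θ - I * (d + s * w)) * (Complex.cosh (d + s * w))⁻¹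
    + b * (I * Complex.sin (Θ - I * (d + s * w)) * (Complex.cosh (d + s * w))⁻¹
      - Complex.cos (Θ - I * (d + s * w)) * Complex.sinh (d + s * w) *
        ((Complex.cosh (d + s * w))⁻¹) ^ 2))

noncomputable def solS (K d s : ℂ) : ℂ → ℂ := fun w =>
  K * ((Complex.cosh (d + s * w))⁻¹) ^ 2

lemma affine_hasDerivAt (d b z : ℂ) : HasDerivAt (fun w : ℂ => d + b * w) b z := by
  simpa using ((hasDerivAt_id z).const_mul b).const_add d

lemma solF_hasDerivAt (Q A Θ d b z : ℂ) (h : Complex.cosh (d + b * z) ≠ 0) :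
    HasDerivAt (solF Q A Θ d b)
      (Q * Complex.exp (I * A * z) *
        (I * A * Complex.cos (Θ - I * (d + b * z)) * (Complex.cosh (d + b * z))⁻¹
          + b * (I * Complex.sin (Θ - I * (d + b * z)) * (Complex.cosh (d + b * z))⁻¹
            - Complex.cos (Θ - I * (d + b * z)) * Complex.sinh (d + b * z) *
              ((Complex.cosh (d + b * z))⁻¹) ^ 2))) z := by
  have h1 := affine_hasDerivAt d b z
  have h2 : HasDerivAt (fun w : ℂ => Θ - I * (d + b * w)) (-(I * b)) z :=
    (h1.const_mul I).const_sub Θ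
  have h3 := h2.ccos
  have h5 := (h1.ccosh).inv h
  have h6 : HasDerivAt (fun w : ℂ => Q * Complex.exp (I * A * w))
      (Q * (Complex.exp (I * A * z) * (I * A * 1))) z :=
    (((hasDerivAt_id z).const_mul (I * A)).cexp).const_mul Q
  have h7 := (h6.mul h3).mul h5
  refine h7.congr_deriv ?_
  simp only [Pi.mul_apply, Pi.inv_apply, Pi.pow_apply, Nat.reduceSub]
  ring

lemma solFr_hasDerivAt (Q A Θ d b z : ℂ) (h : Complex.cosh (d + b * z) ≠ 0) :
    HasDerivAt (solFr Q A Θ d b)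
      (Q * Complex.exp (-(I * A * z)) *
        (-(I * A) * Complex.cos (Θ + I * (d + b * z)) * (Complex.cosh (d + b * z))⁻¹
          + b * (-(I * Complex.sin (Θ + I * (d + b * z)) * (Complex.cosh (d + b * z))⁻¹)
            - Complex.cos (Θ + I * (d + b * z)) * Complex.sinh (d + b * z) *
              ((Complex.cosh (d + b * z))⁻¹) ^ 2))) z := by
  have h1 := affine_hasDerivAt d b z
  have h2 : HasDerivAt (fun w : ℂ => Θ + I * (d + b * w)) (I * b) z := by
    simpa using (h1.const_mul I).const_add Θ
  have h3 := h2.ccos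
  have h5 := (h1.ccosh).inv h
  have h6 : HasDerivAt (fun w : ℂ => Q * Complex.exp (-(I * A * w)))
      (Q * (Complex.exp (-(I * A * z)) * (-(I * A * 1)))) z :=
    ((((hasDerivAt_id z).const_mul (I * A)).neg).cexp).const_mul Q
  have h7 := (h6.mul h3).mul h5
  refine h7.congr_deriv ?_
  simp only [Pi.mul_apply, Pi.inv_apply, Pi.pow_apply, Nat.reduceSub]
  ring


lemma solG_hasDerivAt (Q A E Θ b d s z : ℂ) (h : Complex.cosh (d + s * z) ≠ 0) :
    HasDerivAt (solG Q A E Θ b d s)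
      (Q * E * s *
        (I * A * (I * Complex.sin (Θ - I * (d + s * z)) * (Complex.cosh (d + s * z))⁻¹
            - Complex.cos (Θ - I * (d + s * z)) * Complex.sinh (d + s * z) *
              ((Complex.cosh (d + s * z))⁻¹) ^ 2)
          + b * (-(I ^ 2) * Complex.cos (Θ - I * (d + s * z)) * (Complex.cosh (d + s * z))⁻¹
            + -(2 * I) * Complex.sin (Θ - I * (d + s * z)) * Complex.sinh (d + s * z) *
              ((Complex.cosh (d + s * z))⁻¹) ^ 2
            - Complex.cos (Θ - I * (d + s * z)) * Complex.cosh (d + s * z) *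
              ((Complex.cosh (d + s * z))⁻¹) ^ 2
            + 2 * Complex.cos (Θ - I * (d + s * z)) * (Complex.sinh (d + s * z)) ^ 2 *
              ((Complex.cosh (d + s * z))⁻¹) ^ 3))) z := by
  have h1 := affine_hasDerivAt d s z
  have h2 : HasDerivAt (fun w : ℂ => Θ - I * (d + s * w)) (-(I * s)) z :=
    (h1.const_mul I).const_sub Θ
  have hcos := h2.ccos
  have hsin := h2.csin
  have hcosh := h1.ccosh
  have hsinh := h1.csinh
  have hinv := hcosh.inv h
  have hinv2 := hinv.pow 2
  have t1 := (hcos.const_mul (I * A)).mul hinv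
  have t2 := (hsin.const_mul I).mul hinv
  have t3 := (hcos.mul hsinh).mul hinv2
  have h7 := ((t1.add ((t2.sub t3).const_mul b)).const_mul (Q * E))
  refine h7.congr_deriv ?_
  simp only [Pi.mul_apply, Pi.inv_apply, Pi.pow_apply, Nat.reduceSub]
  ring

lemma solS_hasDerivAt (K d s z : ℂ) (h : Complex.cosh (d + s * z) ≠ 0) :
    HasDerivAt (solS K d s)
      (K * (-2 * s) * Complex.sinh (d + s * z) * ((Complex.cosh (d + s * z))⁻¹) ^ 3) z := by
  have h1 := affine_hasDerivAt d s z
  have hinv := (h1.ccosh).inv h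
  have h7 := (hinv.pow 2).const_mul K
  refine h7.congr_deriv ?_
  simp only [Pi.mul_apply, Pi.inv_apply, Pi.pow_apply, Nat.reduceSub]
  ring

/-- The dark one-soliton `q(x,t) = q₀ e^{iαt} cos(θ₊ - iξ) sech ξ`,
`ξ = q₀ x sin θ₊ + (αt/2) tan θ₊`, together with
`s = (1/2) q₀ α sin θ₊ tan θ₊ sech² ξ`, is an exact solution of the nonlocal
reverse space-time Sinh-Gordon equation `q_{xt} + 2sq = 0`,
`s_x = -∂_t(q(x,t)q(-x,-t))`, with `s(-x,-t) = s(x,t)`. -/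
theorem rst_sinhGordon_dark_one_soliton (q₀ α θp : ℝ) (hq₀ : 0 < q₀)
    (hθ : θp ∈ Set.Ioo 0 Real.pi) (hθ' : θp ≠ Real.pi / 2)
    (ξ : ℝ → ℝ → ℝ)
    (hξ : ∀ x t : ℝ, ξ x t = q₀ * x * Real.sin θp + α * t / 2 * Real.tan θp)
    (q s : ℝ → ℝ → ℂ)
    (hq : ∀ x t : ℝ, q x t =
      (q₀ : ℂ) * Complex.exp (Complex.I * (α : ℂ) * (t : ℂ)) *
        Complex.cos ((θp : ℂ) - Complex.I * (ξ x t : ℂ)) *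
        (1 / Complex.cosh ((ξ x t : ℂ))))
    (hs : ∀ x t : ℝ, s x t =
      ((1 / 2 * q₀ * α * Real.sin θp * Real.tan θp * (1 / Real.cosh (ξ x t)) ^ 2 : ℝ) : ℂ)) :
    (∀ x t : ℝ,
      deriv (fun y : ℝ => deriv (fun τ : ℝ => q y τ) t) x + 2 * s x t * q x t = 0) ∧
    (∀ x t : ℝ,
      deriv (fun y : ℝ => s y t) x = -deriv (fun τ : ℝ => q x τ * q (-x) (-τ)) t) ∧
    (∀ x t : ℝ, s (-x) (-t) = s x t) := by
  obtain ⟨hθ1, hθ2⟩ := hθ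
  have hcθ : Real.cos θp ≠ 0 := by
    intro h
    exact hθ' (Real.injOn_cos ⟨le_of_lt hθ1, le_of_lt hθ2⟩
      ⟨by positivity, by linarith [Real.pi_pos]⟩ (by rw [h, Real.cos_pi_div_two]))
  set aR : ℝ := q₀ * Real.sin θp with haRdef
  set bR : ℝ := α / 2 * Real.tan θp with hbRdef
  have hξ2 : ∀ x t : ℝ, ξ x t = aR * x + bR * t := by
    intro x t; rw [hξ, haRdef, hbRdef]; ring
  have hr3R : 2 * bR * Real.cos θp = α * Real.sin θp := by
    rw [hbRdef, Real.tan_eq_sin_div_cos]; field_simp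
  have hch0 : ∀ (z : ℂ) (r : ℝ), z = (r : ℂ) → Complex.cosh z ≠ 0 := by
    rintro z r rfl
    rw [← Complex.ofReal_cosh]
    exact_mod_cast (Real.cosh_pos r).ne'
  have hsR : ∀ x t : ℝ, s x t = ((aR * bR * (1 / Real.cosh (ξ x t)) ^ 2 : ℝ) : ℂ) := by
    intro x t
    rw [hs]
    norm_cast
    rw [haRdef, hbRdef, Real.tan_eq_sin_div_cos]
    ring
  -- pointwise description of q as a restriction of a holomorphic function
  have hqF : ∀ x t : ℝ, q x t = solF (q₀:ℂ) (α:ℂ) (θp:ℂ) ((aR*x : ℝ):ℂ) ((bR : ℝ):ℂ) ((t:ℝ):ℂ) := by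
    intro x t
    rw [hq, show ((ξ x t : ℝ):ℂ) = ((aR*x : ℝ):ℂ) + ((bR:ℝ):ℂ) * ((t:ℝ):ℂ) by
      rw [hξ2]; push_cast; ring]
    simp only [solF]
    ring
  refine ⟨fun x t => ?_, fun x t => ?_, fun x t => ?_⟩
  · -- equation (i)
    have hDt : ∀ y : ℝ, deriv (fun τ : ℝ => q y τ) t =
        solG (q₀:ℂ) (α:ℂ) (Complex.exp (Complex.I * (α:ℂ) * (t:ℂ))) (θp:ℂ) ((bR:ℝ):ℂ)
          ((bR*t : ℝ):ℂ) ((aR:ℝ):ℂ) ((y:ℝ):ℂ) := by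
      intro y
      have hne : Complex.cosh (((aR*y : ℝ):ℂ) + ((bR:ℝ):ℂ) * ((t:ℝ):ℂ)) ≠ 0 :=
        hch0 _ (aR*y + bR*t) (by push_cast; ring)
      have h1 := (solF_hasDerivAt (q₀:ℂ) (α:ℂ) (θp:ℂ) ((aR*y : ℝ):ℂ) ((bR:ℝ):ℂ) ((t:ℝ):ℂ) hne).comp_ofReal
      have h3 : (fun τ : ℝ => q y τ) =
          (fun τ : ℝ => solF (q₀:ℂ) (α:ℂ) (θp:ℂ) ((aR*y : ℝ):ℂ) ((bR:ℝ):ℂ) ((τ:ℝ):ℂ)) :=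
        funext fun τ => hqF y τ
      rw [h3, h1.deriv]
      simp only [solG]
      rw [show ((bR*t : ℝ):ℂ) + ((aR:ℝ):ℂ) * ((y:ℝ):ℂ) = ((aR*y : ℝ):ℂ) + ((bR:ℝ):ℂ) * ((t:ℝ):ℂ) by
        push_cast; ring]
    rw [show (fun y : ℝ => deriv (fun τ : ℝ => q y τ) t) =
        (fun y : ℝ => solG (q₀:ℂ) (α:ℂ) (Complex.exp (Complex.I * (α:ℂ) * (t:ℂ))) (θp:ℂ)
          ((bR:ℝ):ℂ) ((bR*t : ℝ):ℂ) ((aR:ℝ):ℂ) ((y:ℝ):ℂ)) from funext hDt]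
    have hne2 : Complex.cosh (((bR*t : ℝ):ℂ) + ((aR:ℝ):ℂ) * ((x:ℝ):ℂ)) ≠ 0 :=
      hch0 _ (bR*t + aR*x) (by push_cast; ring)
    rw [(solG_hasDerivAt (q₀:ℂ) (α:ℂ) (Complex.exp (Complex.I * (α:ℂ) * (t:ℂ))) (θp:ℂ)
          ((bR:ℝ):ℂ) ((bR*t : ℝ):ℂ) ((aR:ℝ):ℂ) ((x:ℝ):ℂ) hne2).comp_ofReal.deriv]
    rw [show ((bR*t : ℝ):ℂ) + ((aR:ℝ):ℂ) * ((x:ℝ):ℂ) = ((ξ x t : ℝ):ℂ) by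
      rw [hξ2]; push_cast; ring]
    rw [hsR x t, hq x t]
    push_cast
    set V : ℂ := ((ξ x t : ℝ):ℂ) with hVdef
    have hV0 : Complex.cosh V ≠ 0 := hch0 _ (ξ x t) hVdef
    have hCC : Complex.cos ((θp:ℂ) - Complex.I * V) =
        Complex.cos (θp:ℂ) * Complex.cosh V + Complex.sin (θp:ℂ) * (Complex.sinh V * Complex.I) := by
      rw [Complex.cos_sub, mul_comm Complex.I V, Complex.cos_mul_I, Complex.sin_mul_I]
    have hSS : Complex.sin ((θp:ℂ) - Complex.I * V) =
        Complex.sin (θp:ℂ) * Complex.cosh V - Complex.cos (θp:ℂ) * (Complex.sinh V * Complex.I) := by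
      rw [Complex.sin_sub, mul_comm Complex.I V, Complex.cos_mul_I, Complex.sin_mul_I]
    have hj : (Complex.I) ^ 2 = -1 := Complex.I_sq
    have hr3 : 2 * (bR:ℂ) * Complex.cos (θp:ℂ) = (α:ℂ) * Complex.sin (θp:ℂ) := by
      exact_mod_cast congrArg (fun r : ℝ => (r : ℂ)) hr3R
    have hr5 : Complex.cosh V ^ 2 - Complex.sinh V ^ 2 = 1 := Complex.cosh_sq_sub_sinh_sq V
    have hHi : (Complex.cosh V)⁻¹ * Complex.cosh V = 1 := inv_mul_cancel₀ hV0
    linear_combination (norm := ring_nf) ((2) * ((q₀:ℂ)) * (Complex.exp (Complex.I * (α:ℂ) * (t:ℂ))) * ((aR:ℂ)) * ((bR:ℂ)) * ((Complex.cosh (V:ℂ))⁻¹)^3 + (2) * ((q₀:ℂ)) * (Complex.exp (Complex.I * (α:ℂ) * (t:ℂ))) * ((aR:ℂ)) * ((bR:ℂ)) * (Complex.sinh (V:ℂ))^2 * ((Complex.cosh (V:ℂ))⁻¹)^3 + (-1) * ((q₀:ℂ)) * (Complex.exp (Complex.I * (α:ℂ) * (t:ℂ))) * ((aR:ℂ))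 * ((bR:ℂ)) * (Complex.cosh (V:ℂ)) * ((Complex.cosh (V:ℂ))⁻¹)^2 + (-1) * (Complex.I) * ((q₀:ℂ)) * (Complex.exp (Complex.I * (α:ℂ) * (t:ℂ))) * ((α:ℂ)) * ((aR:ℂ)) * (Complex.sinh (V:ℂ)) * ((Complex.cosh (V:ℂ))⁻¹)^2 + (-1) * (Complex.I)^2 * ((q₀:ℂ)) * (Complex.exp (Complex.I * (α:ℂ) * (t:ℂ))) * ((aR:ℂ)) * ((bR:ℂ)) * ((Complex.cosh (V:ℂ))⁻¹)) * hCC + ((-2) * (Complex.I) * ((q₀:ℂ)) * (Complex.exp (Complex.I * (α:ℂ) * (t:ℂ))) * ((aR:ℂ)) * ((bR:ℂ)) * (Complex.sinh (V:ℂ)) * ((Complex.cosh (V:ℂ))⁻¹)^2 + (1) * (Complex.I)^2 * ((q₀:ℂ)) * (Complex.exp (Complex.I * (α:ℂ) * (t:ℂ))) * ((α:ℂ)) * ((aR:ℂ)) * ((Complex.cosh (V:ℂ))⁻¹)) * hSS + ((2) * ((q₀:ℂ)) * (Complex.exp (Complex.I * (α:ℂ) * (t:ℂ))) * ((aR:ℂ))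 * ((bR:ℂ)) * (Complex.cos (θp:ℂ)) * (Complex.sinh (V:ℂ))^2 * ((Complex.cosh (V:ℂ))⁻¹)^2 + (-1) * ((q₀:ℂ)) * (Complex.exp (Complex.I * (α:ℂ) * (t:ℂ))) * ((aR:ℂ)) * ((bR:ℂ)) * (Complex.cos (θp:ℂ)) * (Complex.cosh (V:ℂ)) * ((Complex.cosh (V:ℂ))⁻¹) + (-1) * ((q₀:ℂ)) * (Complex.exp (Complex.I * (α:ℂ) * (t:ℂ))) * ((α:ℂ)) * ((aR:ℂ)) * (Complex.sin (θp:ℂ)) * (Complex.sinh (V:ℂ))^2 * ((Complex.cosh (V:ℂ))⁻¹)^2 + (1) * ((q₀:ℂ)) * (Complex.exp (Complex.I * (α:ℂ) * (t:ℂ))) * ((α:ℂ)) * ((aR:ℂ)) * (Complex.sin (θp:ℂ)) * (Complex.cosh (V:ℂ)) * ((Complex.cosh (V:ℂ))⁻¹) + (-1) * (Complex.I) * ((q₀:ℂ)) * (Complex.exp (Complex.I * (α:ℂ) * (t:ℂ))) * ((aR:ℂ)) * ((bR:ℂ)) * (Complex.sin (θp:ℂ)) * (Complex.sinh (V:ℂ))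 * ((Complex.cosh (V:ℂ))⁻¹) + (-1) * (Complex.I) * ((q₀:ℂ)) * (Complex.exp (Complex.I * (α:ℂ) * (t:ℂ))) * ((α:ℂ)) * ((aR:ℂ)) * (Complex.cos (θp:ℂ)) * (Complex.sinh (V:ℂ)) * ((Complex.cosh (V:ℂ))⁻¹)) * hj + ((-1) * ((q₀:ℂ)) * (Complex.exp (Complex.I * (α:ℂ) * (t:ℂ))) * ((aR:ℂ)) * (Complex.sinh (V:ℂ))^2 * ((Complex.cosh (V:ℂ))⁻¹)^2 + (1/2) * ((q₀:ℂ)) * (Complex.exp (Complex.I * (α:ℂ) * (t:ℂ))) * ((aR:ℂ)) * (Complex.cosh (V:ℂ)) * ((Complex.cosh (V:ℂ))⁻¹) + (1) * ((q₀:ℂ)) * (Complex.exp (Complex.I * (α:ℂ) * (t:ℂ))) * ((aR:ℂ)) * (Complex.cosh (V:ℂ)) * ((Complex.cosh (V:ℂ))⁻¹)^3 + (1) * ((q₀:ℂ)) * (Complex.exp (Complex.I * (α:ℂ) * (t:ℂ))) * ((aR:ℂ)) * (Complex.cosh (V:ℂ)) * (Complex.sinh (V:ℂ))^2 * ((Complex.cosh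 (V:ℂ))⁻¹)^3 + (-1/2) * ((q₀:ℂ)) * (Complex.exp (Complex.I * (α:ℂ) * (t:ℂ))) * ((aR:ℂ)) * (Complex.cosh (V:ℂ))^2 * ((Complex.cosh (V:ℂ))⁻¹)^2) * hr3 + ((-1) * ((q₀:ℂ)) * (Complex.exp (Complex.I * (α:ℂ) * (t:ℂ))) * ((α:ℂ)) * ((aR:ℂ)) * (Complex.sin (θp:ℂ)) * (Complex.cosh (V:ℂ)) * ((Complex.cosh (V:ℂ))⁻¹)^3 + (-2) * (Complex.I) * ((q₀:ℂ)) * (Complex.exp (Complex.I * (α:ℂ) * (t:ℂ))) * ((aR:ℂ)) * ((bR:ℂ)) * (Complex.sin (θp:ℂ)) * (Complex.sinh (V:ℂ)) * ((Complex.cosh (V:ℂ))⁻¹)^3) * hr5 + ((1/2) * ((q₀:ℂ)) * (Complex.exp (Complex.I * (α:ℂ) * (t:ℂ))) * ((α:ℂ)) * ((aR:ℂ)) * (Complex.sin (θp:ℂ)) * (Complex.cosh (V:ℂ)) * ((Complex.cosh (V:ℂ))⁻¹) + (1) * ((q₀:ℂ)) * (Complex.exp (Complex.I * (α:ℂ)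 * (t:ℂ))) * ((α:ℂ)) * ((aR:ℂ)) * (Complex.sin (θp:ℂ)) * (Complex.cosh (V:ℂ))^2 * ((Complex.cosh (V:ℂ))⁻¹)^2 + (-1) * (Complex.I) * ((q₀:ℂ)) * (Complex.exp (Complex.I * (α:ℂ) * (t:ℂ))) * ((aR:ℂ)) * ((bR:ℂ)) * (Complex.sin (θp:ℂ)) * (Complex.sinh (V:ℂ)) * ((Complex.cosh (V:ℂ))⁻¹) + (2) * (Complex.I) * ((q₀:ℂ)) * (Complex.exp (Complex.I * (α:ℂ) * (t:ℂ))) * ((aR:ℂ)) * ((bR:ℂ)) * (Complex.sin (θp:ℂ)) * (Complex.cosh (V:ℂ)) * (Complex.sinh (V:ℂ)) * ((Complex.cosh (V:ℂ))⁻¹)^2 + (-1) * (Complex.I) * ((q₀:ℂ)) * (Complex.exp (Complex.I * (α:ℂ) * (t:ℂ))) * ((α:ℂ)) * ((aR:ℂ)) * (Complex.cos (θp:ℂ)) * (Complex.sinh (V:ℂ)) * ((Complex.cosh (V:ℂ))⁻¹)) * hHi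
  · -- equation (ii)
    have hne : Complex.cosh (((aR*x : ℝ):ℂ) + ((bR:ℝ):ℂ) * ((t:ℝ):ℂ)) ≠ 0 :=
      hch0 _ (aR*x + bR*t) (by push_cast; ring)
    have hne2 : Complex.cosh (((bR*t : ℝ):ℂ) + ((aR:ℝ):ℂ) * ((x:ℝ):ℂ)) ≠ 0 :=
      hch0 _ (bR*t + aR*x) (by push_cast; ring)
    have hLfun : (fun y : ℝ => s y t) =
        (fun y : ℝ => solS ((aR:ℂ) * (bR:ℂ)) ((bR*t : ℝ):ℂ) ((aR:ℝ):ℂ) ((y:ℝ):ℂ)) := by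
      funext y
      rw [hsR y t]
      simp only [solS]
      push_cast
      rw [show ((ξ y t : ℝ):ℂ) = (bR:ℂ) * (t:ℂ) + (aR:ℂ) * (y:ℂ) by rw [hξ2]; push_cast; ring]
      ring
    rw [hLfun,
      (solS_hasDerivAt ((aR:ℂ) * (bR:ℂ)) ((bR*t : ℝ):ℂ) ((aR:ℝ):ℂ) ((x:ℝ):ℂ) hne2).comp_ofReal.deriv]
    have hRfun : (fun τ : ℝ => q x τ * q (-x) (-τ)) =
        (fun τ : ℝ => solF (q₀:ℂ) (α:ℂ) (θp:ℂ) ((aR*x : ℝ):ℂ) ((bR:ℝ):ℂ) ((τ:ℝ):ℂ) *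
          solFr (q₀:ℂ) (α:ℂ) (θp:ℂ) ((aR*x : ℝ):ℂ) ((bR:ℝ):ℂ) ((τ:ℝ):ℂ)) := by
      funext τ
      rw [hq x τ, hq (-x) (-τ)]
      simp only [solF, solFr]
      rw [show ((ξ (-x) (-τ) : ℝ):ℂ) = -(((aR*x : ℝ):ℂ) + ((bR:ℝ):ℂ) * ((τ:ℝ):ℂ)) by
            rw [hξ2]; push_cast; ring,
          show ((ξ x τ : ℝ):ℂ) = ((aR*x : ℝ):ℂ) + ((bR:ℝ):ℂ) * ((τ:ℝ):ℂ) by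
            rw [hξ2]; push_cast; ring,
          Complex.cosh_neg,
          show ((θp:ℂ) - Complex.I * -(((aR*x : ℝ):ℂ) + ((bR:ℝ):ℂ) * ((τ:ℝ):ℂ))) =
            (θp:ℂ) + Complex.I * (((aR*x : ℝ):ℂ) + ((bR:ℝ):ℂ) * ((τ:ℝ):ℂ)) by ring,
          show ((-τ : ℝ):ℂ) = -(τ:ℂ) by push_cast; ring,
          show Complex.I * (α:ℂ) * -(τ:ℂ) = -(Complex.I * (α:ℂ) * (τ:ℂ)) by ring]
      ring
    have hd := ((solF_hasDerivAt (q₀:ℂ) (α:ℂ) (θp:ℂ) ((aR*x : ℝ):ℂ) ((bR:ℝ):ℂ) ((t:ℝ):ℂ) hne).mul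
      (solFr_hasDerivAt (q₀:ℂ) (α:ℂ) (θp:ℂ) ((aR*x : ℝ):ℂ) ((bR:ℝ):ℂ) ((t:ℝ):ℂ) hne)).comp_ofReal
    simp only [Pi.mul_apply] at hd
    rw [hRfun, hd.deriv]
    simp only [solF, solFr]
    rw [show ((bR*t : ℝ):ℂ) + ((aR:ℝ):ℂ) * ((x:ℝ):ℂ) = ((ξ x t : ℝ):ℂ) by
          rw [hξ2]; push_cast; ring,
        show ((aR*x : ℝ):ℂ) + ((bR:ℝ):ℂ) * ((t:ℝ):ℂ) = ((ξ x t : ℝ):ℂ) by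
          rw [hξ2]; push_cast; ring]
    set V : ℂ := ((ξ x t : ℝ):ℂ) with hVdef
    have hV0 : Complex.cosh V ≠ 0 := hch0 _ (ξ x t) hVdef
    have hCC : Complex.cos ((θp:ℂ) - Complex.I * V) =
        Complex.cos (θp:ℂ) * Complex.cosh V + Complex.sin (θp:ℂ) * (Complex.sinh V * Complex.I) := by
      rw [Complex.cos_sub, mul_comm Complex.I V, Complex.cos_mul_I, Complex.sin_mul_I]
    have hSS : Complex.sin ((θp:ℂ) - Complex.I * V) =
        Complex.sin (θp:ℂ) * Complex.cosh V - Complex.cos (θp:ℂ) * (Complex.sinh V * Complex.I) := by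
      rw [Complex.sin_sub, mul_comm Complex.I V, Complex.cos_mul_I, Complex.sin_mul_I]
    have hCp : Complex.cos ((θp:ℂ) + Complex.I * V) =
        Complex.cos (θp:ℂ) * Complex.cosh V - Complex.sin (θp:ℂ) * (Complex.sinh V * Complex.I) := by
      rw [Complex.cos_add, mul_comm Complex.I V, Complex.cos_mul_I, Complex.sin_mul_I]
    have hSp : Complex.sin ((θp:ℂ) + Complex.I * V) =
        Complex.sin (θp:ℂ) * Complex.cosh V + Complex.cos (θp:ℂ) * (Complex.sinh V * Complex.I) := by
      rw [Complex.sin_add, mul_comm Complex.I V, Complex.cos_mul_I, Complex.sin_mul_I]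
    have hj : (Complex.I) ^ 2 = -1 := Complex.I_sq
    have hr5 : Complex.cosh V ^ 2 - Complex.sinh V ^ 2 = 1 := Complex.cosh_sq_sub_sinh_sq V
    have hHi : (Complex.cosh V)⁻¹ * Complex.cosh V = 1 := inv_mul_cancel₀ hV0
    have hP : Complex.sin (θp:ℂ) ^ 2 + Complex.cos (θp:ℂ) ^ 2 = 1 := Complex.sin_sq_add_cos_sq _
    have hEr : Complex.exp (Complex.I * (α:ℂ) * (t:ℂ)) *
        Complex.exp (-(Complex.I * (α:ℂ) * (t:ℂ))) = 1 := by
      rw [← Complex.exp_add]; simp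
    have hAa : (aR:ℂ) = (q₀:ℂ) * Complex.sin (θp:ℂ) := by
      rw [haRdef]; push_cast; ring
    linear_combination (norm := ring_nf) ((-2) * ((q₀:ℂ))^2 * (Complex.exp (Complex.I * (α:ℂ) * (t:ℂ))) * (Complex.exp (-(Complex.I * (α:ℂ) * (t:ℂ)))) * ((bR:ℂ)) * (Complex.sinh (V:ℂ)) * ((Complex.cosh (V:ℂ))⁻¹)^3 * (Complex.cos ((θp:ℂ) + Complex.I * (V:ℂ))) + (-1) * (Complex.I) * ((q₀:ℂ))^2 * (Complex.exp (Complex.I * (α:ℂ) * (t:ℂ))) * (Complex.exp (-(Complex.I * (α:ℂ) * (t:ℂ)))) * ((bR:ℂ)) * ((Complex.cosh (V:ℂ))⁻¹)^2 * (Complex.sin ((θp:ℂ) + Complex.I * (V:ℂ)))) * hCC + ((1) * (Complex.I) * ((q₀:ℂ))^2 * (Complex.exp (Complex.I * (α:ℂ) * (t:ℂ))) * (Complex.exp (-(Complex.I * (α:ℂ) * (t:ℂ)))) * ((bR:ℂ)) * ((Complex.cosh (V:ℂ))⁻¹)^2 * (Complex.cos ((θp:ℂ) + Complex.I * (V:ℂ))))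 * hSS + ((-2) * ((q₀:ℂ))^2 * (Complex.exp (Complex.I * (α:ℂ) * (t:ℂ))) * (Complex.exp (-(Complex.I * (α:ℂ) * (t:ℂ)))) * ((bR:ℂ)) * (Complex.cos (θp:ℂ)) * (Complex.cosh (V:ℂ)) * (Complex.sinh (V:ℂ)) * ((Complex.cosh (V:ℂ))⁻¹)^3 + (-2) * (Complex.I) * ((q₀:ℂ))^2 * (Complex.exp (Complex.I * (α:ℂ) * (t:ℂ))) * (Complex.exp (-(Complex.I * (α:ℂ) * (t:ℂ)))) * ((bR:ℂ)) * (Complex.sin (θp:ℂ)) * (Complex.sinh (V:ℂ))^2 * ((Complex.cosh (V:ℂ))⁻¹)^3 + (1) * (Complex.I) * ((q₀:ℂ))^2 * (Complex.exp (Complex.I * (α:ℂ) * (t:ℂ))) * (Complex.exp (-(Complex.I * (α:ℂ) * (t:ℂ)))) * ((bR:ℂ)) * (Complex.sin (θp:ℂ)) * (Complex.cosh (V:ℂ)) * ((Complex.cosh (V:ℂ))⁻¹)^2 + (-1) * (Complex.I)^2 * ((q₀:ℂ))^2 * (Complex.exp (Complex.I * (α:ℂ) * (t:ℂ))) * (Complex.exp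 (-(Complex.I * (α:ℂ) * (t:ℂ)))) * ((bR:ℂ)) * (Complex.cos (θp:ℂ)) * (Complex.sinh (V:ℂ)) * ((Complex.cosh (V:ℂ))⁻¹)^2) * hCp + ((-1) * (Complex.I) * ((q₀:ℂ))^2 * (Complex.exp (Complex.I * (α:ℂ) * (t:ℂ))) * (Complex.exp (-(Complex.I * (α:ℂ) * (t:ℂ)))) * ((bR:ℂ)) * (Complex.cos (θp:ℂ)) * (Complex.cosh (V:ℂ)) * ((Complex.cosh (V:ℂ))⁻¹)^2 + (-1) * (Complex.I)^2 * ((q₀:ℂ))^2 * (Complex.exp (Complex.I * (α:ℂ) * (t:ℂ))) * (Complex.exp (-(Complex.I * (α:ℂ) * (t:ℂ)))) * ((bR:ℂ)) * (Complex.sin (θp:ℂ)) * (Complex.sinh (V:ℂ)) * ((Complex.cosh (V:ℂ))⁻¹)^2) * hSp + ((-2) * ((q₀:ℂ))^2 * ((bR:ℂ)) * (Complex.cos (θp:ℂ))^2 * (Complex.cosh (V:ℂ))^2 * (Complex.sinh (V:ℂ)) * ((Complex.cosh (V:ℂ))⁻¹)^3 + (2) * (Complex.I)^2 * ((q₀:ℂ))^2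 * ((bR:ℂ)) * (Complex.sin (θp:ℂ))^2 * (Complex.sinh (V:ℂ))^3 * ((Complex.cosh (V:ℂ))⁻¹)^3 + (-2) * (Complex.I)^2 * ((q₀:ℂ))^2 * ((bR:ℂ)) * (Complex.sin (θp:ℂ))^2 * (Complex.cosh (V:ℂ)) * (Complex.sinh (V:ℂ)) * ((Complex.cosh (V:ℂ))⁻¹)^2 + (-2) * (Complex.I)^2 * ((q₀:ℂ))^2 * ((bR:ℂ)) * (Complex.cos (θp:ℂ))^2 * (Complex.cosh (V:ℂ)) * (Complex.sinh (V:ℂ)) * ((Complex.cosh (V:ℂ))⁻¹)^2) * hEr + ((2) * ((q₀:ℂ))^2 * ((bR:ℂ)) * (Complex.sin (θp:ℂ))^2 * (Complex.sinh (V:ℂ))^3 * ((Complex.cosh (V:ℂ))⁻¹)^3 + (-2) * ((q₀:ℂ))^2 * ((bR:ℂ)) * (Complex.sin (θp:ℂ))^2 * (Complex.cosh (V:ℂ)) * (Complex.sinh (V:ℂ)) * ((Complex.cosh (V:ℂ))⁻¹)^2 + (-2) * ((q₀:ℂ))^2 * ((bR:ℂ)) * (Complex.cos (θp:ℂ))^2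 * (Complex.cosh (V:ℂ)) * (Complex.sinh (V:ℂ)) * ((Complex.cosh (V:ℂ))⁻¹)^2) * hj + ((-2) * ((aR:ℂ)) * ((bR:ℂ)) * (Complex.sinh (V:ℂ)) * ((Complex.cosh (V:ℂ))⁻¹)^3 + (-2) * ((q₀:ℂ)) * ((bR:ℂ)) * (Complex.sin (θp:ℂ)) * (Complex.sinh (V:ℂ)) * ((Complex.cosh (V:ℂ))⁻¹)^3) * hAa + ((2) * ((q₀:ℂ))^2 * ((bR:ℂ)) * (Complex.sin (θp:ℂ))^2 * (Complex.sinh (V:ℂ)) * ((Complex.cosh (V:ℂ))⁻¹)^3) * hr5 + ((2) * ((q₀:ℂ))^2 * ((bR:ℂ)) * (Complex.cosh (V:ℂ)) * (Complex.sinh (V:ℂ)) * ((Complex.cosh (V:ℂ))⁻¹)^2 + (-2) * ((q₀:ℂ))^2 * ((bR:ℂ)) * (Complex.cosh (V:ℂ))^2 * (Complex.sinh (V:ℂ)) * ((Complex.cosh (V:ℂ))⁻¹)^3) * hP + ((-2) * ((q₀:ℂ))^2 * ((bR:ℂ)) * (Complex.cosh (V:ℂ)) * (Complex.sinh (V:ℂ))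 * ((Complex.cosh (V:ℂ))⁻¹)^2) * hHi

  · -- equation (iii)
    rw [hs, hs, show ξ (-x) (-t) = -ξ x t by rw [hξ2, hξ2]; ring, Real.cosh_neg]
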